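/- Let E be a real normed space, U ⊆ E open, g : U → E a C¹ vector field, and ψ : U → ℝ a C¹ function with ψ(x) > 0 for all x ∈ U. Define the vector fields f₁(x) := √(ψ(x))·sin(log ψ(x))·g(x) and f₂(x) := √(ψ(x))·cos(log ψ(x))·g(x) on U. Then for every x ∈ U the Lie bracket [f₁,f₂](x) := Df₂(x)(f₁(x)) − Df₁(x)(f₂(x)) equals −(Dψ(x)(g(x)))·g(x), i.e. [f₁,f₂] = −(gψ)·g where gψ is the Lie derivative of ψ along g. -/

import Mathlib

open Filter Topology

/-- Let `U` be open in a real normed space `E`, let `g : U → E` be a `C¹`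
vector field and `ψ : U → ℝ` a `C¹` function with `ψ > 0` on `U`.  With
`f₁ = (√ψ · sin(log ψ)) • g` and `f₂ = (√ψ · cos(log ψ)) • g`, the Lie bracket
`[f₁,f₂](x) = Df₂(x)(f₁(x)) - Df₁(x)(f₂(x))` equals `-(Dψ(x)(g(x))) • g(x)` on `U`. -/
theorem stmt18 {E : Type*} [NormedAddCommGroup E] [NormedSpace ℝ E]
    {U : Set E} (hU : IsOpen U) (g : E → E) (ψ : E → ℝ)
    (hg : ContDiffOn ℝ 1 g U) (hψ : ContDiffOn ℝ 1 ψ U) (hpos : ∀ x ∈ U, 0 < ψ x) :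
    ∀ x ∈ U,
      fderiv ℝ (fun y => (Real.sqrt (ψ y) * Real.cos (Real.log (ψ y))) • g y) x
          ((Real.sqrt (ψ x) * Real.sin (Real.log (ψ x))) • g x) -
        fderiv ℝ (fun y => (Real.sqrt (ψ y) * Real.sin (Real.log (ψ y))) • g y) x
          ((Real.sqrt (ψ x) * Real.cos (Real.log (ψ x))) • g x) =
      -(fderiv ℝ ψ x (g x)) • g x := by
  intro x hx
  have hxU : U ∈ nhds x := hU.mem_nhds hx
  have ht : 0 < ψ x := hpos x hx
  have hψd : HasFDerivAt ψ (fderiv ℝ ψ x) x :=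
    (((hψ.contDiffAt hxU).differentiableAt one_ne_zero)).hasFDerivAt
  have hgd : HasFDerivAt g (fderiv ℝ g x) x :=
    (((hg.contDiffAt hxU).differentiableAt one_ne_zero)).hasFDerivAt
  set t := ψ x with htdef
  set p := fderiv ℝ ψ x
  set G := fderiv ℝ g x
  set s := Real.sin (Real.log t)
  set c := Real.cos (Real.log t)
  -- derivatives of the scalar functions
  have hlog : HasDerivAt Real.log t⁻¹ t := Real.hasDerivAt_log ht.ne'
  have hsqrt : HasDerivAt Real.sqrt (1 / (2 * Real.sqrt t)) t :=
    Real.hasDerivAt_sqrt ht.ne'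
  have hsin : HasDerivAt (fun u => Real.sin (Real.log u)) (c * t⁻¹) t :=
    (Real.hasDerivAt_sin (Real.log t)).comp t hlog
  have hcos : HasDerivAt (fun u => Real.cos (Real.log u)) (-s * t⁻¹) t :=
    (Real.hasDerivAt_cos (Real.log t)).comp t hlog
  have hA : HasDerivAt (fun u => Real.sqrt u * Real.sin (Real.log u))
      (1 / (2 * Real.sqrt t) * s + Real.sqrt t * (c * t⁻¹)) t := hsqrt.mul hsin
  have hB : HasDerivAt (fun u => Real.sqrt u * Real.cos (Real.log u))
      (1 / (2 * Real.sqrt t) * c + Real.sqrt t * (-s * t⁻¹)) t := hsqrt.mul hcos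
  set A' := 1 / (2 * Real.sqrt t) * s + Real.sqrt t * (c * t⁻¹)
  set B' := 1 / (2 * Real.sqrt t) * c + Real.sqrt t * (-s * t⁻¹)
  have hAx : HasFDerivAt (fun y => Real.sqrt (ψ y) * Real.sin (Real.log (ψ y)))
      (A' • p) x := hA.comp_hasFDerivAt x hψd
  have hBx : HasFDerivAt (fun y => Real.sqrt (ψ y) * Real.cos (Real.log (ψ y)))
      (B' • p) x := hB.comp_hasFDerivAt x hψd
  have hf1 : HasFDerivAt (fun y => (Real.sqrt (ψ y) * Real.sin (Real.log (ψ y))) • g y)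
      ((Real.sqrt t * s) • G + (A' • p).smulRight (g x)) x := hAx.smul hgd
  have hf2 : HasFDerivAt (fun y => (Real.sqrt (ψ y) * Real.cos (Real.log (ψ y))) • g y)
      ((Real.sqrt t * c) • G + (B' • p).smulRight (g x)) x := hBx.smul hgd
  rw [hf1.fderiv, hf2.fderiv]
  have hsq : Real.sqrt t * Real.sqrt t = t := Real.mul_self_sqrt ht.le
  have hkey : B' * (Real.sqrt t * s) - A' * (Real.sqrt t * c) = -1 := by
    have hs0 : Real.sqrt t ≠ 0 := (Real.sqrt_pos.mpr ht).ne'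
    have ht0 : t ≠ 0 := ht.ne'
    have htrig : s ^ 2 + c ^ 2 = 1 := Real.sin_sq_add_cos_sq _
    simp only [A', B']
    field_simp
    linear_combination (-2*Real.sqrt t^2) * htrig + (-2) * hsq
  simp only [ContinuousLinearMap.add_apply, ContinuousLinearMap.smul_apply,
    ContinuousLinearMap.smulRight_apply, ContinuousLinearMap.coe_smul', Pi.smul_apply,
    map_smul, smul_eq_mul]
  rw [smul_add, smul_add, smul_smul, smul_smul, smul_smul, smul_smul]
  match_scalars
  · ring
  · linear_combination p (g x) * hkey
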